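/- For 0 < α < 1 and y ∈ (0, 1-α²), the function a₀(α,y) = π(1-α)/2 - arctan(√y/√(1-α²-y)) + α·arctan(α√y/√(1-α²-y)) is strictly decreasing in y and positive on (0, 1-α²). -/

import Mathlib

open Set Filter Real

/-- a₀(α,y) = π(1-α)/2 - arctan(√y/√(1-α²-y)) + α arctan(α√y/√(1-α²-y)). -/
noncomputable def a0 (α y : ℝ) : ℝ :=
  Real.pi * (1 - α) / 2 - Real.arctan (Real.sqrt y / Real.sqrt (1 - α ^ 2 - y)) +
    α * Real.arctan (α * Real.sqrt y / Real.sqrt (1 - α ^ 2 - y))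

noncomputable def g0 (α t : ℝ) : ℝ :=
  Real.pi * (1 - α) / 2 - Real.arctan t + α * Real.arctan (α * t)

lemma g0_strictAnti (α : ℝ) (hα0 : 0 < α) (hα1 : α < 1) : StrictAnti (g0 α) := by
  apply strictAnti_of_hasDerivAt_neg
    (f' := fun t => 0 - 1 / (1 + t ^ 2) + α * (1 / (1 + (α * t) ^ 2) * α))
  · intro t
    have h1 : HasDerivAt Real.arctan (1 / (1 + t ^ 2)) t := Real.hasDerivAt_arctan t
    have h2 : HasDerivAt (fun t => Real.arctan (α * t)) (1 / (1 + (α * t) ^ 2) * α) t := by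
      have := (Real.hasDerivAt_arctan (α * t)).comp t ((hasDerivAt_id t).const_mul α)
      simpa [Function.comp_def] using this
    have := ((hasDerivAt_const t (Real.pi * (1 - α) / 2)).sub h1).add (h2.const_mul α)
    exact this
  · intro t
    have ht : (0:ℝ) < 1 + t ^ 2 := by positivity
    have ht' : (0:ℝ) < 1 + (α * t) ^ 2 := by positivity
    have key : α * (1 / (1 + (α * t) ^ 2) * α) < 1 / (1 + t ^ 2) := by
      rw [show α * (1 / (1 + (α * t) ^ 2) * α) = α ^ 2 / (1 + (α * t) ^ 2) by ring,
        div_lt_div_iff₀ ht' ht]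
      nlinarith
    nlinarith [key]

lemma g0_tendsto (α : ℝ) (hα0 : 0 < α) : Tendsto (g0 α) atTop (nhds 0) := by
  have h1 : Tendsto Real.arctan atTop (nhds (Real.pi / 2)) :=
    Real.tendsto_arctan_atTop.mono_right nhdsWithin_le_nhds
  have h2 : Tendsto (fun t => Real.arctan (α * t)) atTop (nhds (Real.pi / 2)) :=
    h1.comp (tendsto_atTop_atTop_of_monotone (fun a b hab => by nlinarith)
      (fun b => ⟨b / α, by field_simp; exact le_rfl⟩))
  have := ((tendsto_const_nhds (x := Real.pi * (1 - α) / 2) (f := atTop)).sub h1).add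
    (h2.const_mul α)
  convert this using 1
  · rfl
  · congr 1; ring

lemma g0_pos (α : ℝ) (hα0 : 0 < α) (hα1 : α < 1) (t : ℝ) : 0 < g0 α t := by
  have h1 : g0 α (t + 1) < g0 α t := g0_strictAnti α hα0 hα1 (by linarith)
  have h2 : (0:ℝ) ≤ g0 α (t + 1) := by
    refine le_of_tendsto (g0_tendsto α hα0) ?_
    filter_upwards [eventually_ge_atTop (t + 1)] with s hs
    exact (g0_strictAnti α hα0 hα1).antitone hs
  linarith

lemma a0_eq (α y : ℝ) : a0 α y = g0 α (Real.sqrt y / Real.sqrt (1 - α ^ 2 - y)) := by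
  simp only [a0, g0, mul_div_assoc]

theorem a0_strictAnti_pos (α : ℝ) (hα0 : 0 < α) (hα1 : α < 1) :
    StrictAntiOn (a0 α) (Ioo 0 (1 - α ^ 2)) ∧
    ∀ y ∈ Ioo (0 : ℝ) (1 - α ^ 2), 0 < a0 α y := by
  constructor
  · intro y₁ hy₁ y₂ hy₂ h12
    rw [a0_eq, a0_eq]
    apply g0_strictAnti α hα0 hα1
    have hs1 : Real.sqrt y₁ < Real.sqrt y₂ := Real.sqrt_lt_sqrt hy₁.1.le h12
    have hd2 : (0:ℝ) < Real.sqrt (1 - α ^ 2 - y₂) := Real.sqrt_pos.mpr (by linarith [hy₂.2])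
    have hd : Real.sqrt (1 - α ^ 2 - y₂) < Real.sqrt (1 - α ^ 2 - y₁) :=
      Real.sqrt_lt_sqrt (by linarith [hy₂.2]) (by linarith)
    have h0 : (0:ℝ) ≤ Real.sqrt y₁ := Real.sqrt_nonneg _
    have hd1 : (0:ℝ) < Real.sqrt (1 - α ^ 2 - y₁) := hd2.trans hd
    rw [div_lt_div_iff₀ hd1 hd2]
    nlinarith
  · intro y hy
    rw [a0_eq]
    exact g0_pos α hα0 hα1 _
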